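/- Let k ≥ 2 and let b₁, …, b_k be integers with b_i ≥ 2 for all i and b_j ≥ 3 for at least one j. Then the symmetric k × k 'cycle' matrix A with A_{ii} = −b_i, A_{i,i+1} = A_{i+1,i} = 1 (indices mod k, and with A_{1,k} = A_{k,1} = 1), and all other entries 0, is negative definite. (For k = 2 interpret the cyclic adjacency as A_{1,2} = A_{2,1} = 2.) -/

import Mathlib

/-- The intersection matrix of a cyclic configuration of `k` curves with self-intersections
`−b_i`: `A_{ii} = −b_i`, cyclically adjacent entries equal to the number of cyclic adjacencies
(so that for `k = 2` the off-diagonal entries are `2`), all other entries `0`. -/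
def cycleMatrix (k : ℕ) (b : Fin k → ℤ) : Matrix (Fin k) (Fin k) ℤ :=
  Matrix.of fun i j =>
    if i = j then -b i
    else (if ((i : ℕ) + 1) % k = (j : ℕ) then 1 else 0) +
         (if ((j : ℕ) + 1) % k = (i : ℕ) then 1 else 0)

/-- the cyclic intersection matrix with all `b_i ≥ 2` and some `b_j ≥ 3`
is negative definite. -/
theorem cycleMatrix_negDef (k : ℕ) (hk : 2 ≤ k) (b : Fin k → ℤ) (hb : ∀ i, 2 ≤ b i)
    (hb3 : ∃ j, 3 ≤ b j) :
    ∀ x : Fin k → ℝ, x ≠ 0 →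
      dotProduct x (((cycleMatrix k b).map (Int.cast : ℤ → ℝ)).mulVec x) < 0 := by
  intro x hx
  haveI : NeZero k := ⟨by omega⟩
  set M := (cycleMatrix k b).map (Int.cast : ℤ → ℝ) with hMdef
  have hone : ((1 : Fin k) : ℕ) = 1 := by
    simp [Fin.val_one', Nat.mod_eq_of_lt (by omega : 1 < k)]
  have h10 : (1 : Fin k) ≠ 0 := by
    intro h
    have := congrArg Fin.val h
    rw [hone, Fin.val_zero] at this
    exact one_ne_zero this
  have hne : ∀ i : Fin k, i + 1 ≠ i := by
    intro i h
    exact h10 (by rwa [add_eq_left] at h)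
  have hcond : ∀ i j : Fin k, (((i : ℕ) + 1) % k = (j : ℕ)) ↔ j = i + 1 := by
    intro i j
    have hval : ((i + 1 : Fin k) : ℕ) = ((i : ℕ) + 1) % k := by
      rw [Fin.val_add, hone]
    rw [← hval, Fin.val_eq_val, eq_comm]
  have hMentry : ∀ i j : Fin k, M i j =
      (if i = j then -(b i : ℝ) else 0) + (if j = i + 1 then 1 else 0) +
        (if i = j + 1 then 1 else 0) := by
    intro i j
    simp only [hMdef, Matrix.map_apply, cycleMatrix, Matrix.of_apply]
    by_cases h : i = j
    · subst h
      simp [hne i, Ne.symm (hne i)]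
    · simp only [h, if_neg h, hcond i j, hcond j i]
      push_cast
      ring
  have hmv : ∀ i, M.mulVec x i = -(b i : ℝ) * x i + x (i + 1) + x (i - 1) := by
    intro i
    have hc3 : ∀ j : Fin k, (i = j + 1) ↔ (j = i - 1) := by
      intro j
      rw [eq_sub_iff_add_eq, eq_comm]
    simp only [Matrix.mulVec, dotProduct, hMentry, add_mul, ite_mul, zero_mul,
      one_mul, Finset.sum_add_distrib, hc3]
    simp [Finset.sum_ite_eq, Finset.sum_ite_eq']
  -- the quadratic form
  have hQ : dotProduct x (M.mulVec x) =
      ∑ i, (-((b i : ℝ) * x i ^ 2) + x i * x (i + 1) + x i * x (i - 1)) := by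
    simp only [dotProduct, hmv]
    exact Finset.sum_congr rfl fun i _ => by ring
  have hshift : ∀ f : Fin k → ℝ, ∑ i, f (i + 1) = ∑ i, f i :=
    fun f => Fintype.sum_equiv (Equiv.addRight (1 : Fin k)) _ _ (fun i => rfl)
  have hsub : (∑ i, x i * x (i - 1)) = ∑ i, x i * x (i + 1) := by
    rw [← hshift (fun i => x i * x (i - 1))]
    exact Finset.sum_congr rfl fun i _ => by rw [add_sub_cancel_right]; ring
  set S : ℝ := ∑ i, x i ^ 2 with hSdef
  set P : ℝ := ∑ i, x i * x (i + 1) with hPdef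
  set B : ℝ := ∑ i, (b i : ℝ) * x i ^ 2 with hBdef
  set T1 : ℝ := ∑ i, ((b i : ℝ) - 2) * x i ^ 2 with hT1def
  set T2 : ℝ := ∑ i, (x i - x (i + 1)) ^ 2 with hT2def
  have hx2 : (∑ i, x (i + 1) ^ 2) = S := hshift (fun i => x i ^ 2)
  have e1 : T1 = B - 2 * S := by
    calc T1 = ∑ i, ((b i : ℝ) * x i ^ 2 - 2 * x i ^ 2) :=
          Finset.sum_congr rfl fun i _ => by ring
      _ = B - 2 * S := by rw [Finset.sum_sub_distrib, ← Finset.mul_sum]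
  have e2 : T2 = S - 2 * P + S := by
    calc T2 = ∑ i, (x i ^ 2 - 2 * (x i * x (i + 1)) + x (i + 1) ^ 2) :=
          Finset.sum_congr rfl fun i _ => by ring
      _ = S - 2 * P + S := by
          rw [Finset.sum_add_distrib, Finset.sum_sub_distrib, ← Finset.mul_sum, hx2]
  have e3 : dotProduct x (M.mulVec x) = -B + P + P := by
    rw [hQ, Finset.sum_add_distrib, Finset.sum_add_distrib, hsub, ← Finset.sum_neg_distrib]
  have key : dotProduct x (M.mulVec x) = -(T1 + T2) := by
    rw [e1, e2, e3]; ring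
  rw [key]
  have hT1nonneg : 0 ≤ T1 :=
    Finset.sum_nonneg fun i _ => mul_nonneg (by
      have : (2 : ℝ) ≤ (b i : ℝ) := by exact_mod_cast hb i
      linarith) (sq_nonneg _)
  have hT2nonneg : 0 ≤ T2 := Finset.sum_nonneg fun i _ => sq_nonneg _
  rcases lt_or_eq_of_le (by linarith : (0:ℝ) ≤ T1 + T2) with h | h
  · linarith
  -- contradiction case: T1 + T2 = 0
  exfalso
  have hT1z : (∑ i, ((b i : ℝ) - 2) * x i ^ 2) = 0 := by rw [← hT1def]; linarith
  have hT2z : (∑ i, (x i - x (i + 1)) ^ 2) = 0 := by rw [← hT2def]; linarith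
  have hstep : ∀ i : Fin k, x (i + 1) = x i := by
    intro i
    have h0 := (Finset.sum_eq_zero_iff_of_nonneg
      (fun j (_ : j ∈ Finset.univ) => sq_nonneg (x j - x (j + 1)))).1 hT2z i (Finset.mem_univ i)
    have := pow_eq_zero_iff (n := 2) (by norm_num) |>.1 h0
    linarith [sub_eq_zero.1 this]
  obtain ⟨j, hj⟩ := hb3
  have hxj : x j = 0 := by
    have h0 := (Finset.sum_eq_zero_iff_of_nonneg
      (fun i (_ : i ∈ Finset.univ) => mul_nonneg (by
        have : (2 : ℝ) ≤ (b i : ℝ) := by exact_mod_cast hb i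
        linarith) (sq_nonneg (x i)))).1 hT1z j (Finset.mem_univ j)
    have hbj : (0 : ℝ) < (b j : ℝ) - 2 := by
      have : (3 : ℝ) ≤ (b j : ℝ) := by exact_mod_cast hj
      linarith
    rcases mul_eq_zero.1 h0 with h | h
    · linarith
    · exact pow_eq_zero_iff (n := 2) (by norm_num) |>.1 h
  open Fin.NatCast in
  have hn : ∀ n : ℕ, x (j + (n : Fin k)) = x j := by
    intro n
    induction n with
    | zero => simp
    | succ n ih =>
      have h1 : ((n + 1 : ℕ) : Fin k) = (n : Fin k) + 1 := by push_cast; ring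
      rw [h1, ← add_assoc, hstep, ih]
  apply hx
  funext i
  open Fin.NatCast in
  have := hn ((i - j : Fin k) : ℕ)
  rw [Fin.cast_val_eq_self, add_comm, sub_add_cancel] at this
  rw [this, hxj]
  rfl
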